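/- Suppose that φ(q_i) < M_i − 1 for all sufficiently large i. Then the set E = ⋂_{i=1}^∞ E_i is uncountable. -/

import Mathlib

open Filter Set Metric Pointwise

/-- If `φ(q i) < M i - 1` for all sufficiently large `i`, then `E` is uncountable. -/
theorem falconer_uncountable
    (M : ℕ → ℕ) (hMpos : ∀ i, 0 < M i) (hMmono : Monotone M)
    (hMtop : Tendsto M atTop atTop)
    (q : ℕ → ℕ) (hq0 : q 0 = 2) (hqrec : ∀ i, q (i + 1) = q i ^ M i)
    (φ : ℝ → ℝ) (hφpos : ∀ t : ℝ, 2 ≤ t → 0 < φ t)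
    (hφmono : MonotoneOn φ (Set.Ici (2 : ℝ)))
    (hφtop : Tendsto φ atTop atTop)
    (G : ℕ → Set ℝ)
    (hG : ∀ i, G i = {x : ℝ | ∃ k : ℤ, 0 ≤ k ∧ k ≤ (q i : ℤ) ∧ x = (k : ℝ) / (q i : ℝ)})
    (r : ℕ → ℝ) (hr : ∀ i, r i = (q i : ℝ) ^ (-φ ((q i : ℕ) : ℝ)))
    (Ei : ℕ → Set ℝ)
    (hEi : ∀ i, Ei i = {x ∈ Set.Icc (0 : ℝ) 1 | Metric.infDist x (G i) ≤ r i})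
    (E : Set ℝ) (hE : E = ⋂ i, Ei i)
    (hyp : ∀ᶠ i in atTop, φ ((q i : ℕ) : ℝ) < (M i : ℝ) - 1) :
    ¬ E.Countable := by
  -- basic facts about q
  have hq2 : ∀ i, 2 ≤ q i := by
    intro i
    induction i with
    | zero => omega
    | succ n ih =>
      rw [hqrec]
      calc 2 ≤ q n := ih
        _ ≤ q n ^ M n := Nat.le_self_pow (hMpos n).ne' _
  have hqpos : ∀ i, 0 < q i := fun i => by have := hq2 i; omega
  have hqposR : ∀ i, (0:ℝ) < q i := fun i => by exact_mod_cast hqpos i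
  have hqmono : Monotone q := by
    apply monotone_nat_of_le_succ
    intro n
    rw [hqrec]
    exact Nat.le_self_pow (hMpos n).ne' _
  have hqdvd : ∀ i j, i ≤ j → q i ∣ q j := by
    intro i j hij
    induction j, hij using Nat.le_induction with
    | base => exact dvd_rfl
    | succ n hn ih =>
      rw [hqrec]
      exact ih.trans (dvd_pow_self (q n) (hMpos n).ne')
  -- choose N2
  rw [eventually_atTop] at hyp
  obtain ⟨N0, hN0⟩ := hyp
  obtain ⟨N1, hN1⟩ := eventually_atTop.mp (hMtop.eventually_ge_atTop 2)
  set N2 : ℕ := max N0 N1 + 1 with hN2def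
  have hA : ∀ i, N2 ≤ i → φ (q i) < (M i : ℝ) - 1 := fun i hi => hN0 i (by omega)
  have hB : ∀ i, N2 ≤ i → 2 ≤ M i := fun i hi => hN1 i (by omega)
  have hC : ∀ i, N2 ≤ i → 4 ≤ q i := by
    intro i hi
    obtain ⟨j, rfl⟩ : ∃ j, i = j + 1 := ⟨i - 1, by omega⟩
    have hj : N1 ≤ j := by omega
    rw [hqrec]
    calc (4:ℕ) = 2 ^ 2 := rfl
      _ ≤ q j ^ 2 := Nat.pow_le_pow_left (hq2 j) 2
      _ ≤ q j ^ M j := Nat.pow_le_pow_right (hqpos j) (hN1 j hj)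
  have hE4 : ∀ i, N2 ≤ i → 4 * q i ≤ q (i + 1) := by
    intro i hi
    rw [hqrec]
    calc 4 * q i ≤ q i * q i := by have := hC i hi; nlinarith
      _ = q i ^ 2 := by ring
      _ ≤ q i ^ M i := Nat.pow_le_pow_right (hqpos i) (hB i hi)
  have hD : ∀ i, N2 ≤ i → (q i : ℝ) / q (i + 1) ≤ r i := by
    intro i hi
    rw [hr]
    have h1 : (1:ℝ) ≤ q i := by exact_mod_cast (hqpos i)
    have h2 : (q i : ℝ) ^ (-((M i : ℝ) - 1)) ≤ (q i : ℝ) ^ (-φ (q i)) := by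
      apply Real.rpow_le_rpow_of_exponent_le h1
      linarith [hA i hi]
    refine le_trans (le_of_eq ?_) h2
    have h3 : ((q (i+1) : ℕ) : ℝ) = (q i : ℝ) ^ (M i : ℕ) := by rw [hqrec]; push_cast; ring
    rw [neg_sub, Real.rpow_sub (hqposR i), Real.rpow_one, Real.rpow_natCast, h3]
  -- geometric growth from N2 on
  have hgeo : ∀ j t, N2 ≤ j → 2 ^ t * q j ≤ q (j + t) := by
    intro j t hj
    induction t with
    | zero => simp
    | succ t ih =>
      have h1 : 2 * q (j + t) ≤ q (j + t + 1) := by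
        have := hE4 (j + t) (by omega)
        omega
      calc 2 ^ (t+1) * q j = 2 * (2 ^ t * q j) := by ring
        _ ≤ 2 * q (j + t) := by omega
        _ ≤ q (j + t + 1) := h1
  -- summability and tail bound of 1/q
  have hbound : ∀ j t, N2 ≤ j → (1:ℝ) / q (j + t) ≤ (1 / q j : ℝ) * (1/2) ^ t := by
    intro j t hj
    rw [div_mul_eq_mul_div, one_mul, div_le_div_iff₀ (hqposR _) (hqposR _)]
    have h1 : ((2:ℝ) ^ t) * q j ≤ q (j + t) := by exact_mod_cast hgeo j t hj
    have h2 : ((1:ℝ)/2) ^ t * (2:ℝ) ^ t = 1 := by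
      rw [← mul_pow]; norm_num
    nlinarith [pow_pos (by norm_num : (0:ℝ) < 1/2) t]
  have hgsum : Summable (fun t => ((1:ℝ)/2) ^ t) :=
    summable_geometric_of_lt_one (by norm_num) (by norm_num)
  have hsummable : ∀ j, N2 ≤ j → Summable (fun t => (1:ℝ) / q (j + t)) := by
    intro j hj
    exact Summable.of_nonneg_of_le (fun t => by positivity) (fun t => hbound j t hj)
      (hgsum.mul_left _)
  have htsum : ∀ j, N2 ≤ j → ∑' t, (1:ℝ) / q (j + t) ≤ 2 / q j := by
    intro j hj
    calc ∑' t, (1:ℝ) / q (j + t) ≤ ∑' t, (1 / q j : ℝ) * (1/2) ^ t :=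
          Summable.tsum_le_tsum (fun t => hbound j t hj) (hsummable j hj) (hgsum.mul_left _)
      _ = (1 / q j) * ∑' t, ((1:ℝ)/2) ^ t := tsum_mul_left
      _ = (1 / q j) * 2 := by rw [tsum_geometric_of_lt_one (by norm_num) (by norm_num)]; norm_num
      _ = 2 / q j := by ring
  -- positivity of r
  have hrpos : ∀ i, 0 < r i := by
    intro i; rw [hr]; exact Real.rpow_pos_of_pos (hqposR i) _
  -- choose a constant dominating the finitely many constraints below N2
  obtain ⟨c, hc⟩ : ∃ c : ℕ, ∀ i < N2, 4 / r i ≤ (c:ℝ) := by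
    refine ⟨⌈∑ j ∈ Finset.range N2, 4 / r j⌉₊, fun i hi => ?_⟩
    calc 4 / r i ≤ ∑ j ∈ Finset.range N2, 4 / r j :=
          Finset.single_le_sum (f := fun j => 4 / r j)
            (fun j _ => (div_pos (by norm_num) (hrpos j)).le)
            (Finset.mem_range.mpr hi)
      _ ≤ _ := Nat.le_ceil _
  -- choose N
  obtain ⟨t0, ht0⟩ : ∃ t0 : ℕ, c ≤ 2 ^ t0 := ⟨c, (Nat.lt_two_pow_self (n := c)).le⟩
  set N : ℕ := N2 + t0 with hNdef
  have hNge : N2 ≤ N := by omega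
  have hcq : (c : ℝ) ≤ q (N + 1) := by
    have h1 : 2 ^ t0 * q N2 ≤ q N := hgeo N2 t0 le_rfl
    have h2 : q N ≤ q (N + 1) := hqmono (by omega)
    have h3 : c ≤ q (N + 1) := by nlinarith [hq2 N2]
    exact_mod_cast h3
  have hqN4 : (4:ℝ) ≤ q (N + 1) := by exact_mod_cast hC (N+1) (by omega)
  have hkey1 : ∀ i, i ≤ N → 4 / (q (N + 1) : ℝ) ≤ r i := by
    intro i hi
    rcases lt_or_ge i N2 with h | h
    · have := hc i h
      rw [div_le_iff₀ (hrpos i)] at this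
      rw [div_le_iff₀ (hqposR _)]
      nlinarith [hrpos i]
    · calc 4 / (q (N + 1) : ℝ) ≤ 4 / q (i + 1) := by
            apply div_le_div_of_nonneg_left (by norm_num) (hqposR _)
            exact_mod_cast hqmono (by omega)
        _ ≤ (q i : ℝ) / q (i + 1) := by
            gcongr
            exact_mod_cast hC i h
        _ ≤ r i := hD i h
  have hkey2 : ∀ i, N ≤ i → 4 / (q (i + 1) : ℝ) ≤ r i := by
    intro i hi
    calc 4 / (q (i + 1) : ℝ) ≤ (q i : ℝ) / q (i + 1) := by
          gcongr
          exact_mod_cast hC i (by omega)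
      _ ≤ r i := hD i (by omega)
  -- the Cantor-type family of points
  set a : (ℕ → Bool) → ℕ → ℝ :=
    fun σ m => (if σ m then (2:ℝ) else 1) / q (N + 1 + m) with hadef
  have ha_nonneg : ∀ σ m, 0 ≤ a σ m := by
    intro σ m
    simp only [hadef]
    have := (hqposR (N+1+m)).le
    split <;> positivity
  have ha_le : ∀ σ m, a σ m ≤ 2 * (1 / q (N + 1 + m)) := by
    intro σ m
    simp only [hadef, mul_one_div]
    split
    · exact le_rfl
    · rw [div_le_div_iff₀ (hqposR _) (hqposR _)]
      nlinarith [hqposR (N+1+m)]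
  have hsa : ∀ σ, Summable (a σ) := by
    intro σ
    exact Summable.of_nonneg_of_le (ha_nonneg σ) (ha_le σ)
      ((hsummable (N+1) (by omega)).mul_left 2)
  have hsat : ∀ σ t, Summable (fun m => a σ (m + t)) := by
    intro σ t
    exact (summable_nat_add_iff t).mpr (hsa σ)
  have htailf : ∀ σ t, ∑' m, a σ (m + t) ≤ 4 / q (N + 1 + t) := by
    intro σ t
    have hb : ∀ m, a σ (m + t) ≤ 2 * (1 / q (N + 1 + t + m)) := by
      intro m
      have h1 : N + 1 + (m + t) = N + 1 + t + m := by omega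
      have := ha_le σ (m + t)
      rwa [h1] at this
    calc ∑' m, a σ (m + t) ≤ ∑' m, 2 * ((1:ℝ) / q (N + 1 + t + m)) :=
          Summable.tsum_le_tsum hb (hsat σ t) ((hsummable (N+1+t) (by omega)).mul_left 2)
      _ = 2 * ∑' m, (1:ℝ) / q (N + 1 + t + m) := tsum_mul_left
      _ ≤ 2 * (2 / q (N + 1 + t)) := by
          have := htsum (N+1+t) (by omega)
          linarith
      _ = 4 / q (N + 1 + t) := by ring
  set f : (ℕ → Bool) → ℝ := fun σ => ∑' m, a σ m with hfdef
  have hf0 : ∀ σ, 0 ≤ f σ := fun σ => tsum_nonneg (ha_nonneg σ)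
  have hfle : ∀ σ, f σ ≤ 4 / q (N + 1) := by
    intro σ
    have := htailf σ 0
    simp only [hfdef]
    simpa using this
  have hfle1 : ∀ σ, f σ ≤ 1 := by
    intro σ
    refine (hfle σ).trans ?_
    rw [div_le_one (by linarith [hqposR (N+1)] : (0:ℝ) < q (N+1))]
    exact hqN4
  have hP_le_f : ∀ σ t, ∑ m ∈ Finset.range t, a σ m ≤ f σ := by
    intro σ t
    exact Summable.sum_le_tsum _ (fun m _ => ha_nonneg σ m) (hsa σ)
  have hPtail : ∀ σ t, f σ - ∑ m ∈ Finset.range t, a σ m = ∑' m, a σ (m + t) := by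
    intro σ t
    have := Summable.sum_add_tsum_nat_add t (hsa σ)
    linarith
  -- partial sums are grid points
  have hgrid : ∀ σ t, ∃ K : ℕ, (K:ℝ) ≤ q (N + t) ∧
      ∑ m ∈ Finset.range t, a σ m = (K:ℝ) / q (N + t) := by
    intro σ t
    induction t with
    | zero => exact ⟨0, by exact_mod_cast Nat.zero_le _, by simp⟩
    | succ t ih =>
      obtain ⟨K, hK1, hK2⟩ := ih
      obtain ⟨d, hd⟩ := hqdvd (N + t) (N + t + 1) (by omega)
      set b : ℕ := if σ t then 2 else 1 with hbdef
      have hdR : (q (N + t + 1) : ℝ) = (q (N + t) : ℝ) * d := by exact_mod_cast hd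
      have heq : ∑ m ∈ Finset.range (t+1), a σ m = ((K * d + b : ℕ) : ℝ) / q (N + t + 1) := by
        rw [Finset.sum_range_succ, hK2]
        have hat : a σ t = (b:ℝ) / q (N + t + 1) := by
          simp only [hadef, hbdef]
          have h1 : N + 1 + t = N + t + 1 := by omega
          rw [h1]
          split <;> norm_num
        rw [hat]
        have hd0 : (d:ℝ) ≠ 0 := by
          intro h0
          rw [h0, mul_zero] at hdR
          exact (hqposR (N+t+1)).ne' hdR
        push_cast
        have hq0' : (q (N+t):ℝ) ≠ 0 := (hqposR _).ne'
        have hq1' : (q (N+t+1):ℝ) ≠ 0 := (hqposR _).ne'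
        field_simp
        rw [hdR]
        ring
      refine ⟨K * d + b, ?_, by exact heq⟩
      have hle1 : ∑ m ∈ Finset.range (t+1), a σ m ≤ 1 := (hP_le_f σ (t+1)).trans (hfle1 σ)
      rw [heq, div_le_one (hqposR _)] at hle1
      exact hle1
  -- membership in E
  have hmem : ∀ σ, f σ ∈ E := by
    intro σ
    rw [hE, mem_iInter]
    intro i
    rw [hEi]
    refine ⟨⟨hf0 σ, hfle1 σ⟩, ?_⟩
    rcases le_or_gt i N with hi | hi
    · have h0G : (0:ℝ) ∈ G i := by
        rw [hG]
        exact ⟨0, le_rfl, Int.natCast_nonneg (q i), by norm_num⟩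
      calc infDist (f σ) (G i) ≤ dist (f σ) 0 := infDist_le_dist_of_mem h0G
        _ = f σ := by rw [Real.dist_eq, sub_zero, abs_of_nonneg (hf0 σ)]
        _ ≤ 4 / q (N+1) := hfle σ
        _ ≤ r i := hkey1 i hi
    · obtain ⟨t, rfl⟩ : ∃ t, i = N + t := ⟨i - N, by omega⟩
      obtain ⟨K, hK1, hK2⟩ := hgrid σ t
      have hgG : (K:ℝ) / q (N + t) ∈ G (N + t) := by
        rw [hG]
        refine ⟨K, Int.natCast_nonneg K, ?_, by push_cast; ring⟩
        exact_mod_cast hK1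
      calc infDist (f σ) (G (N+t)) ≤ dist (f σ) ((K:ℝ)/q (N+t)) :=
            infDist_le_dist_of_mem hgG
        _ = f σ - ∑ m ∈ Finset.range t, a σ m := by
            rw [Real.dist_eq, ← hK2, abs_of_nonneg (by linarith [hP_le_f σ t])]
        _ = ∑' m, a σ (m + t) := hPtail σ t
        _ ≤ 4 / q (N + 1 + t) := htailf σ t
        _ = 4 / q ((N + t) + 1) := by rw [show N+1+t = N+t+1 by omega]
        _ ≤ r (N + t) := hkey2 (N + t) (by omega)
  -- injectivity
  have hinj : Function.Injective f := by
    intro σ τ hfeq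
    by_contra hne
    have hex : ∃ m, σ m ≠ τ m := by
      by_contra h
      push_neg at h
      exact hne (funext h)
    set m := Nat.find hex with hmdef
    have hm1 : σ m ≠ τ m := Nat.find_spec hex
    have hm2 : ∀ k, k < m → σ k = τ k := fun k hk => by
      have := Nat.find_min hex hk
      simpa using this
    have hDS : Summable (fun k => a σ k - a τ k) := (hsa σ).sub (hsa τ)
    have hzero : ∑' k, (a σ k - a τ k) = 0 := by
      rw [Summable.tsum_sub (hsa σ) (hsa τ)]
      simp only [hfdef] at hfeq
      rw [hfeq, sub_self]
    have hsplit := Summable.sum_add_tsum_nat_add (m+1) hDS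
    have hhead : ∑ k ∈ Finset.range (m+1), (a σ k - a τ k) = a σ m - a τ m := by
      rw [Finset.sum_range_succ]
      have h0 : ∑ k ∈ Finset.range m, (a σ k - a τ k) = 0 := by
        apply Finset.sum_eq_zero
        intro k hk
        rw [Finset.mem_range] at hk
        simp only [hadef, hm2 k hk, sub_self]
      rw [h0, zero_add]
    have htail1 : ∀ k, ‖a σ (k + (m+1)) - a τ (k + (m+1))‖ ≤ (1:ℝ)/q (N+2+m+k) := by
      intro k
      have h1 : ‖(if σ (k+(m+1)) then (2:ℝ) else 1) - (if τ (k+(m+1)) then (2:ℝ) else 1)‖ ≤ 1 := by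
        rcases σ (k+(m+1)) <;> rcases τ (k+(m+1)) <;> norm_num
      have h2 : a σ (k+(m+1)) - a τ (k+(m+1)) =
          ((if σ (k+(m+1)) then (2:ℝ) else 1) - (if τ (k+(m+1)) then (2:ℝ) else 1))
            / q (N+1+(k+(m+1))) := by
        simp only [hadef]
        rw [div_sub_div_same]
      rw [h2]
      have h3 : N+1+(k+(m+1)) = N+2+m+k := by omega
      rw [h3, norm_div]
      have h4 : ‖(q (N+2+m+k) : ℝ)‖ = (q (N+2+m+k) : ℝ) := by
        rw [Real.norm_eq_abs, abs_of_pos (hqposR _)]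
      rw [h4]
      gcongr
    have hnormsum : Summable (fun k => ‖a σ (k + (m+1)) - a τ (k + (m+1))‖) :=
      Summable.of_nonneg_of_le (fun k => norm_nonneg _) htail1 (hsummable (N+2+m) (by omega))
    have hT : ‖∑' k, (a σ (k + (m+1)) - a τ (k + (m+1)))‖ ≤ 2 / q (N+2+m) := by
      calc ‖∑' k, (a σ (k + (m+1)) - a τ (k + (m+1)))‖
          ≤ ∑' k, ‖a σ (k + (m+1)) - a τ (k + (m+1))‖ := norm_tsum_le_tsum_norm hnormsum
        _ ≤ ∑' k, (1:ℝ)/q (N+2+m+k) :=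
            Summable.tsum_le_tsum htail1 hnormsum (hsummable (N+2+m) (by omega))
        _ ≤ 2 / q (N+2+m) := htsum (N+2+m) (by omega)
    have hval : ‖a σ m - a τ m‖ = 1 / q (N+1+m) := by
      simp only [hadef]
      rw [div_sub_div_same, norm_div]
      have h4 : ‖(q (N+1+m) : ℝ)‖ = (q (N+1+m) : ℝ) := by
        rw [Real.norm_eq_abs, abs_of_pos (hqposR _)]
      rw [h4]
      congr 1
      cases hσ : σ m <;> cases hτ : τ m
      · exact absurd (hσ.trans hτ.symm) hm1
      · simp only [hσ, hτ]; norm_num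
      · simp only [hσ, hτ]; norm_num
      · exact absurd (hσ.trans hτ.symm) hm1
    have hheadT : a σ m - a τ m = - ∑' k, (a σ (k + (m+1)) - a τ (k + (m+1))) := by
      rw [hhead] at hsplit
      rw [← hsplit] at hzero
      linarith [hzero]
    have hfin : (1:ℝ) / q (N+1+m) ≤ 2 / q (N+2+m) := by
      rw [← hval, hheadT, norm_neg]
      exact hT
    have hgrow : 4 * q (N+1+m) ≤ q (N+2+m) := by
      have := hE4 (N+1+m) (by omega)
      have h5 : N+1+m+1 = N+2+m := by omega
      rwa [h5] at this
    have hgrowR : 4 * (q (N+1+m):ℝ) ≤ q (N+2+m) := by exact_mod_cast hgrow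
    rw [div_le_div_iff₀ (hqposR _) (hqposR _)] at hfin
    nlinarith [hqposR (N+1+m), hqposR (N+2+m)]
  -- conclusion
  intro hc
  have h1 : (Set.range f).Countable := hc.mono (range_subset_iff.2 hmem)
  have h2 : Countable (ℕ → Bool) := by
    have := h1.to_subtype
    exact (Equiv.ofInjective f hinj).countable_iff.2 this
  have h3 : Uncountable (ℕ → Bool) := by
    rw [← Cardinal.aleph0_lt_mk_iff, Cardinal.mk_arrow, Cardinal.mk_bool, Cardinal.mk_nat,
      Cardinal.lift_id, Cardinal.lift_id]
    exact Cardinal.cantor _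
  exact (not_countable_iff.mpr h3) h2
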